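/- For all integers n ≥ 1, a1, a2, t ≥ 0 and c1, c2 ≥ 1, H*_n({1}^{a1}, c1, {1}^{a2}, c2, {1}^t) = -∑_{k=1}^{n} (-1)^k·C(n,k)/k^{a1+c1+a2+c2+t} - ∑_{i2+j2+|x2|=c2, i2,j2≥1} ∑_{k=1}^{n} (-1)^k·H_{k-1}(x2, i2+t)·C(n,k)/k^{a1+c1+a2+j2} - ∑_{i1+j1+|x1|=c1, i1,j1≥1} ∑_{k=1}^{n} (-1)^k·H_{k-1}(x1, i1+a2+c2+t)·C(n,k)/k^{a1+j1} - ∑_{iα+jα+|xα|=cα, iα,jα≥1, α=1,2} ∑_{k=1}^{n} (-1)^k·H_{k-1}(x1, i1+a2+j2, x2, i2+t)·C(n,k)/k^{a1+j1}, where the inner sums over x1, x2 range over all (possibly empty) compositions of positive integers with the stated total weights |x1|, |x2|. -/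

import Mathlib

open Finset

/-- Sign factor for an alternating multiple harmonic sum entry. -/
def aSgn (s : ℤ) : ℚ := if 0 < s then 1 else -1

/-- Alternating multiple harmonic sum `H_n(s₁,…,s_ℓ)` (strict indices). -/
def Hh : ℕ → List ℤ → ℚ
  | _, [] => 1
  | n, s :: r => ∑ k ∈ Finset.Icc 1 n, aSgn s ^ k / (k : ℚ) ^ s.natAbs * Hh (k - 1) r

/-- Alternating multiple harmonic star sum `H*_n(s₁,…,s_ℓ)` (weak indices). -/
def Hstar : ℕ → List ℤ → ℚ
  | _, [] => 1
  | n, s :: r => ∑ k ∈ Finset.Icc 1 n, aSgn s ^ k / (k : ℚ) ^ s.natAbs * Hstar k r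

/-- All compositions (ordered tuples of positive integers) of `w`. -/
def comps : ℕ → List (List ℕ)
  | 0 => [[]]
  | (w+1) => (List.range (w+1)).flatMap (fun j => (comps (w - j)).map (fun l => (j+1) :: l))
decreasing_by simp_wf <;> omega

/-- Coerce a list of naturals to a list of integers. -/
def natList (l : List ℕ) : List ℤ := l.map (fun m => (m : ℤ))

def Hp : ℕ → List ℕ → ℚ
  | _, [] => 1
  | n, s :: r => ∑ k ∈ Finset.Icc 1 n, Hp (k - 1) r / (k : ℚ) ^ s

def Hps : ℕ → List ℕ → ℚ
  | _, [] => 1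
  | n, s :: r => ∑ k ∈ Finset.Icc 1 n, Hps k r / (k : ℚ) ^ s

def G (n m : ℕ) (s : List ℕ) : ℚ :=
  ∑ k ∈ Finset.Icc 1 n, (-1 : ℚ) ^ (k+1) * Hp (k-1) s * (n.choose k) / (k : ℚ) ^ m

lemma hp_cast (l : List ℕ) (hl : ∀ x ∈ l, 1 ≤ x) : ∀ n, Hh n (natList l) = Hp n l := by
  induction l with
  | nil => intro n; rfl
  | cons a r ih =>
    intro n
    have ha : (1:ℕ) ≤ a := hl a (by simp)
    rw [show natList (a :: r) = (a:ℤ) :: natList r from rfl, Hh, Hp]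
    refine Finset.sum_congr rfl fun k hk => ?_
    rw [ih (fun x hx => hl x (by simp [hx]))]
    have : aSgn (a:ℤ) = 1 := by unfold aSgn; rw [if_pos]; exact_mod_cast ha
    rw [this]
    simp [div_eq_mul_inv]; ring

lemma hps_cast (l : List ℕ) (hl : ∀ x ∈ l, 1 ≤ x) : ∀ n, Hstar n (natList l) = Hps n l := by
  induction l with
  | nil => intro n; rfl
  | cons a r ih =>
    intro n
    have ha : (1:ℕ) ≤ a := hl a (by simp)
    rw [show natList (a :: r) = (a:ℤ) :: natList r from rfl, Hstar, Hps]
    refine Finset.sum_congr rfl fun k hk => ?_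
    rw [ih (fun x hx => hl x (by simp [hx]))]
    have : aSgn (a:ℤ) = 1 := by unfold aSgn; rw [if_pos]; exact_mod_cast ha
    rw [this]
    simp [div_eq_mul_inv]; ring

lemma comps_pos : ∀ w, ∀ l ∈ comps w, ∀ x ∈ l, 1 ≤ x := by
  intro w
  induction w using Nat.strong_induction_on with
  | _ w ih =>
    match w with
    | 0 => intro l hl; simp [comps] at hl; subst hl; simp
    | (w+1) =>
      intro l hl
      rw [comps] at hl
      simp only [List.mem_flatMap, List.mem_map, List.mem_range] at hl
      obtain ⟨j, hj, l', hl', rfl⟩ := hl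
      intro x hx
      rcases List.mem_cons.mp hx with rfl | hx
      · omega
      · exact ih (w - j) (by omega) l' hl' x hx

lemma sum_flatMap_list {α β : Type} (l : List α) (f : α → List β) [AddCommMonoid β] :
    (l.flatMap f).sum = (l.map (fun x => (f x).sum)).sum := by
  induction l with
  | nil => rfl
  | cons a r ih => simp [List.flatMap_cons, ih]

lemma sum_range_list (N : ℕ) (f : ℕ → ℚ) :
    ∑ j ∈ Finset.range N, f j = ((List.range N).map f).sum := by
  induction N with
  | zero => rfl
  | succ N ih => rw [Finset.sum_range_succ, List.range_succ]; simp [ih]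

lemma comps_succ_sum (w : ℕ) (g : List ℕ → ℚ) :
    ((comps (w+1)).map g).sum
      = ∑ j ∈ Finset.range (w+1), ((comps (w - j)).map (fun x => g ((j+1) :: x))).sum := by
  rw [comps, List.map_flatMap, sum_flatMap_list, sum_range_list]
  congr 1
  apply List.map_congr_left
  intro j _
  simp [List.map_map, Function.comp_def]

lemma choose_div_eq (k l : ℕ) (hk : 1 ≤ k) (hl : 1 ≤ l) :
    (k.choose l : ℚ)/k = ((k-1).choose (l-1) : ℚ)/l := by
  have h := Nat.add_one_mul_choose_eq (k-1) (l-1)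
  rw [show k-1+1 = k by omega, show l-1+1 = l by omega] at h
  have hk0 : (k:ℚ) ≠ 0 := by exact_mod_cast Nat.one_le_iff_ne_zero.mp hk
  have hl0 : (l:ℚ) ≠ 0 := by exact_mod_cast Nat.one_le_iff_ne_zero.mp hl
  have h' : (k:ℚ) * ((k-1).choose (l-1)) = (k.choose l) * l := by exact_mod_cast h
  field_simp
  linarith [h']

lemma sum_Icc_choose_div (n l : ℕ) (hl : 1 ≤ l) :
    ∑ k ∈ Finset.Icc l n, (k.choose l : ℚ)/k = (n.choose l)/l := by
  rcases Nat.eq_zero_or_pos n with rfl | hn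
  · rw [Finset.Icc_eq_empty (by omega)]
    simp [Nat.choose_eq_zero_of_lt hl]
  rw [Finset.sum_congr rfl (fun k hk => choose_div_eq k l (by simp [Finset.mem_Icc] at hk; omega) hl)]
  rw [← Finset.sum_div]
  congr 1
  have hmap : Finset.Icc l n = (Finset.Icc (l-1) (n-1)).map (addRightEmbedding 1) := by
    rw [Finset.map_add_right_Icc]
    congr 1 <;> omega
  rw [hmap, Finset.sum_map]
  simp only [addRightEmbedding_apply]
  have : ∀ r ∈ Finset.Icc (l-1) (n-1), (((r+1) - 1).choose (l-1) : ℚ) = (r.choose (l-1) : ℚ) := by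
    intro r _; norm_num
  rw [Finset.sum_congr rfl this]
  rw [show ∑ r ∈ Finset.Icc (l-1) (n-1), (r.choose (l-1) : ℚ) = ((∑ r ∈ Finset.Icc (l-1) (n-1), r.choose (l-1) : ℕ) : ℚ) by push_cast; ring]
  rw [Nat.sum_Icc_choose]
  congr 2 <;> omega

lemma alt_sum_range_choose_q (N : ℕ) (hN : 1 ≤ N) :
    ∑ r ∈ Finset.range (N+1), (-1:ℚ)^r * (N.choose r) = 0 := by
  have h := @Int.alternating_sum_range_choose N
  rw [if_neg (by omega)] at h
  have h2 : ∑ r ∈ Finset.range (N+1), (-1:ℚ)^r * (N.choose r)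
      = ((∑ m ∈ Finset.range (N+1), (-1:ℤ)^m * (N.choose m : ℤ) : ℤ) : ℚ) := by
    push_cast; rfl
  rw [h2, h]; rfl

lemma alt_choose_partial : ∀ N m : ℕ,
    ∑ l ∈ Finset.Icc (m+1) (N+1), (-1:ℚ)^l * ((N+1).choose l) = (-1)^(m+1) * (N.choose m) := by
  intro N
  induction N with
  | zero =>
    intro m
    rcases Nat.eq_zero_or_pos m with rfl | hm
    · norm_num
    · rw [Finset.Icc_eq_empty (by omega), Nat.choose_eq_zero_of_lt (by omega)]
      simp
  | succ N ih =>
    intro m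
    match m with
    | 0 =>
      have h0 : Finset.range (N+3) = insert 0 (Finset.Icc 1 (N+2)) := by
        ext x; simp [Finset.mem_Icc, Finset.mem_range]; omega
      have h1 := alt_sum_range_choose_q (N+2) (by omega)
      rw [show N+2+1 = N+3 from rfl, h0, Finset.sum_insert (by simp)] at h1
      simp only [pow_zero, one_mul, Nat.choose_zero_right, Nat.cast_one] at h1
      have : ∑ l ∈ Finset.Icc (0+1) (N+1+1), (-1:ℚ)^l * ((N+1+1).choose l) = -1 := by
        rw [show (0+1 : ℕ) = 1 from rfl, show N+1+1 = N+2 from rfl]; linarith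
      rw [this]; simp
    | (m'+1) =>
      have pascal : ∀ l ∈ Finset.Icc (m'+2) (N+2),
          (-1:ℚ)^l * ((N+2).choose l) = (-1)^l * ((N+1).choose (l-1)) + (-1)^l * ((N+1).choose l) := by
        intro l hl
        simp only [Finset.mem_Icc] at hl
        have : (N+2).choose l = (N+1).choose (l-1) + (N+1).choose l := by
          rw [show l = (l-1)+1 by omega]
          rw [show N+2 = (N+1)+1 from rfl, Nat.choose_succ_succ]
          congr 2 <;> omega
        rw [this]; push_cast; ring
      rw [show m'+1+1 = m'+2 from rfl, show N+1+1 = N+2 from rfl]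
      rw [Finset.sum_congr rfl pascal, Finset.sum_add_distrib]
      have hS1 : ∑ l ∈ Finset.Icc (m'+2) (N+2), (-1:ℚ)^l * ((N+1).choose l)
          = (-1)^(m'+2) * (N.choose (m'+1)) := by
        rcases Nat.lt_or_ge N m' with hcase | hcase
        · rw [Finset.Icc_eq_empty (by omega), Nat.choose_eq_zero_of_lt (by omega)]
          simp
        rw [show N+2 = (N+1)+1 from rfl, Finset.sum_Icc_succ_top (by omega : m'+2 ≤ N+2)]
        rw [Nat.choose_eq_zero_of_lt (by omega : N+1 < N+2)]
        rw [show m'+2 = m'+1+1 from rfl, ih (m'+1)]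
        push_cast; ring
      have hre : Finset.Icc (m'+2) (N+2) = (Finset.Icc (m'+1) (N+1)).map (addRightEmbedding 1) := by
        rw [Finset.map_add_right_Icc]
      have hS2 : ∑ l ∈ Finset.Icc (m'+2) (N+2), (-1:ℚ)^l * ((N+1).choose (l-1))
          = (-1:ℚ)^(m'+2) * (N.choose m') := by
        rw [hre, Finset.sum_map]
        simp only [addRightEmbedding_apply, Nat.add_sub_cancel]
        have : ∀ r ∈ Finset.Icc (m'+1) (N+1),
            (-1:ℚ)^(r+1) * ((N+1).choose r) = -((-1:ℚ)^r * ((N+1).choose r)) := by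
          intro r _; rw [pow_succ]; ring
        rw [Finset.sum_congr rfl this, Finset.sum_neg_distrib, ih m']
        ring
      rw [hS1, hS2]
      have : (N+1).choose (m'+1) = N.choose m' + N.choose (m'+1) := Nat.choose_succ_succ N m'
      rw [this]; push_cast; ring

lemma identE : ∀ n m : ℕ, ∑ l ∈ Finset.Icc (m+1) n, (-1:ℚ)^l * (n.choose l)/l
    = (-1)^(m+1) * ∑ k ∈ Finset.Icc (m+1) n, (((k-1).choose m : ℕ) : ℚ)/k := by
  intro n
  induction n with
  | zero => intro m; simp
  | succ n ih =>
    intro m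
    rcases Nat.lt_or_ge (n+1) (m+1) with hcase | hcase
    · rw [Finset.Icc_eq_empty (by omega)]; simp
    have pascal : ∀ l ∈ Finset.Icc (m+1) (n+1),
        (-1:ℚ)^l * ((n+1).choose l)/l = (-1)^l * (n.choose (l-1))/l + (-1)^l * (n.choose l)/l := by
      intro l hl
      simp only [Finset.mem_Icc] at hl
      have : (n+1).choose l = n.choose (l-1) + n.choose l := by
        rw [show l = (l-1)+1 by omega, Nat.choose_succ_succ]
        congr 2 <;> omega
      rw [this]; push_cast; ring
    rw [Finset.sum_congr rfl pascal, Finset.sum_add_distrib]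
    have hA : ∑ l ∈ Finset.Icc (m+1) (n+1), (-1:ℚ)^l * (n.choose l)/l
        = (-1)^(m+1) * ∑ k ∈ Finset.Icc (m+1) n, (((k-1).choose m : ℕ) : ℚ)/k := by
      rw [Finset.sum_Icc_succ_top (by omega : m+1 ≤ n+1)]
      rw [Nat.choose_eq_zero_of_lt (by omega : n < n+1), ih m]
      norm_num
    have hB : ∑ l ∈ Finset.Icc (m+1) (n+1), (-1:ℚ)^l * (n.choose (l-1))/l
        = (-1)^(m+1) * ((n.choose m : ℚ)/(n+1)) := by
      have step : ∀ l ∈ Finset.Icc (m+1) (n+1),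
          (-1:ℚ)^l * (n.choose (l-1))/l = ((-1:ℚ)^l * ((n+1).choose l)) * (1/(n+1)) := by
        intro l hl
        simp only [Finset.mem_Icc] at hl
        have h := Nat.add_one_mul_choose_eq n (l-1)
        rw [show l-1+1 = l by omega] at h
        have h' : ((n:ℚ)+1) * (n.choose (l-1)) = ((n+1).choose l) * l := by exact_mod_cast h
        have hl0 : (l:ℚ) ≠ 0 := by
          have : 1 ≤ l := by omega
          exact_mod_cast Nat.one_le_iff_ne_zero.mp this
        have hn0 : ((n:ℚ)+1) ≠ 0 := by positivity
        have key : ((n.choose (l-1) : ℕ) : ℚ)/l = (((n+1).choose l : ℕ) : ℚ)/((n:ℚ)+1) := by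
          rw [div_eq_div_iff hl0 hn0]
          have h2 : (n.choose (l-1) : ℕ) * (n+1) = ((n+1).choose l) * l := by
            rw [Nat.mul_comm]; exact_mod_cast h
          exact_mod_cast congrArg (fun x : ℕ => (x : ℚ)) h2
        rw [mul_div_assoc, key]
        push_cast
        ring
      rw [Finset.sum_congr rfl step, ← Finset.sum_mul, alt_choose_partial n m]
      ring
    rw [hA, hB, Finset.sum_Icc_succ_top (by omega : m+1 ≤ n+1)]
    rw [show n+1-1 = n by omega]
    push_cast
    ring

lemma sum_Icc_swap (n : ℕ) (f : ℕ → ℕ → ℚ) :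
    ∑ k ∈ Finset.Icc 1 n, ∑ l ∈ Finset.Icc 1 k, f k l
      = ∑ l ∈ Finset.Icc 1 n, ∑ k ∈ Finset.Icc l n, f k l := by
  apply Finset.sum_comm'
  intro k l
  simp only [Finset.mem_Icc]
  omega

lemma G_zero (n : ℕ) (hn : 1 ≤ n) : G n 0 [] = 1 := by
  unfold G
  have hp : ∀ k : ℕ, Hp (k-1) [] = 1 := fun k => rfl
  have h0 : Finset.range (n+1) = insert 0 (Finset.Icc 1 n) := by
    ext x; simp [Finset.mem_Icc, Finset.mem_range]; omega
  have h1 := alt_sum_range_choose_q n hn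
  rw [h0, Finset.sum_insert (by simp)] at h1
  simp only [pow_zero, one_mul, Nat.choose_zero_right, Nat.cast_one] at h1
  have h2 : ∑ k ∈ Finset.Icc 1 n, (-1:ℚ)^k * (n.choose k) = -1 := by linarith
  calc ∑ k ∈ Finset.Icc 1 n, (-1:ℚ)^(k+1) * Hp (k-1) [] * (n.choose k) / (k:ℚ)^0
      = ∑ k ∈ Finset.Icc 1 n, -((-1:ℚ)^k * (n.choose k)) := by
        refine Finset.sum_congr rfl fun k _ => ?_
        rw [hp k, pow_succ]; ring
    _ = 1 := by rw [Finset.sum_neg_distrib, h2]; norm_num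

lemma G_one_step (n m : ℕ) (s : List ℕ) :
    ∑ k ∈ Finset.Icc 1 n, G k m s / k = G n (m+1) s := by
  unfold G
  have h1 : ∀ k : ℕ, (∑ l ∈ Finset.Icc 1 k,
        (-1:ℚ)^(l+1) * Hp (l-1) s * (k.choose l) / (l:ℚ)^m) / k
      = ∑ l ∈ Finset.Icc 1 k,
        ((-1:ℚ)^(l+1) * Hp (l-1) s / (l:ℚ)^m) * ((k.choose l : ℚ)/k) := by
    intro k
    rw [Finset.sum_div]
    refine Finset.sum_congr rfl fun l _ => ?_
    ring
  rw [Finset.sum_congr rfl (fun k _ => h1 k), sum_Icc_swap]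
  refine Finset.sum_congr rfl fun l hl => ?_
  rw [← Finset.mul_sum, sum_Icc_choose_div n l (by simp only [Finset.mem_Icc] at hl; omega)]
  rw [pow_succ]
  ring

lemma G_diff (n j : ℕ) (y : List ℕ) :
    ∑ k ∈ Finset.Icc 1 n, (G k j y - G (k-1) j y) / k
      = G n (j+1) y + G n 1 (j :: y) := by
  -- Step a: the difference as a single sum
  have hdiff : ∀ k : ℕ, 1 ≤ k → G k j y - G (k-1) j y
      = ∑ l ∈ Finset.Icc 1 k, (-1:ℚ)^(l+1) * Hp (l-1) y * (((k-1).choose (l-1) : ℕ) : ℚ) / (l:ℚ)^j := by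
    intro k hk
    have hprev : G (k-1) j y = ∑ l ∈ Finset.Icc 1 k,
        (-1:ℚ)^(l+1) * Hp (l-1) y * (((k-1).choose l : ℕ) : ℚ) / (l:ℚ)^j := by
      unfold G
      rw [show k = (k-1)+1 by omega]
      rw [Finset.sum_Icc_succ_top (by omega : 1 ≤ (k-1)+1)]
      rw [show (k-1)+1-1 = k-1 by omega]
      rw [Nat.choose_eq_zero_of_lt (by omega : k-1 < (k-1)+1)]
      simp
    rw [hprev]
    unfold G
    rw [← Finset.sum_sub_distrib]
    refine Finset.sum_congr rfl fun l hl => ?_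
    simp only [Finset.mem_Icc] at hl
    have hpascal : k.choose l = (k-1).choose (l-1) + (k-1).choose l := by
      rw [show k = (k-1)+1 by omega, show l = (l-1)+1 by omega, Nat.choose_succ_succ]
      congr 2 <;> omega
    rw [hpascal]
    push_cast
    ring
  rw [Finset.sum_congr rfl (fun k hk => by
    rw [hdiff k (by simp only [Finset.mem_Icc] at hk; exact hk.1)])]
  -- Step b: divide by k, push inside, swap
  have h1 : ∀ k : ℕ, (∑ l ∈ Finset.Icc 1 k,
        (-1:ℚ)^(l+1) * Hp (l-1) y * (((k-1).choose (l-1) : ℕ) : ℚ) / (l:ℚ)^j) / k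
      = ∑ l ∈ Finset.Icc 1 k,
        ((-1:ℚ)^(l+1) * Hp (l-1) y / (l:ℚ)^j) * ((((k-1).choose (l-1) : ℕ) : ℚ)/k) := by
    intro k
    rw [Finset.sum_div]
    refine Finset.sum_congr rfl fun l _ => ?_
    ring
  rw [Finset.sum_congr rfl (fun k _ => h1 k), sum_Icc_swap]
  -- Step c: inner sum via identE
  have h2 : ∀ l, 1 ≤ l → ∑ k ∈ Finset.Icc l n, (((k-1).choose (l-1) : ℕ) : ℚ)/k
      = (-1:ℚ)^l * ∑ r ∈ Finset.Icc l n, (-1:ℚ)^r * (n.choose r)/r := by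
    intro l hl
    have h := identE n (l-1)
    rw [show l-1+1 = l by omega] at h
    rw [h]
    rw [← mul_assoc, ← pow_add]
    rw [show l + l = 2*l by ring, pow_mul]
    norm_num
  have h3 : ∑ l ∈ Finset.Icc 1 n, ∑ k ∈ Finset.Icc l n,
        ((-1:ℚ)^(l+1) * Hp (l-1) y / (l:ℚ)^j) * ((((k-1).choose (l-1) : ℕ) : ℚ)/k)
      = ∑ l ∈ Finset.Icc 1 n, ∑ r ∈ Finset.Icc l n,
        (-(Hp (l-1) y / (l:ℚ)^j)) * ((-1:ℚ)^r * (n.choose r)/r) := by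
    refine Finset.sum_congr rfl fun l hl => ?_
    simp only [Finset.mem_Icc] at hl
    rw [← Finset.mul_sum, h2 l hl.1, ← Finset.mul_sum, ← mul_assoc]
    congr 1
    have hpow : (-1:ℚ)^(l+1) * (-1:ℚ)^l = -1 := by
      rw [← pow_add, show l+1+l = 2*l+1 by ring, pow_succ, pow_mul]
      norm_num
    calc (-1:ℚ)^(l+1) * Hp (l-1) y / (l:ℚ)^j * (-1:ℚ)^l
        = ((-1:ℚ)^(l+1) * (-1:ℚ)^l) * (Hp (l-1) y / (l:ℚ)^j) := by ring
      _ = -(Hp (l-1) y / (l:ℚ)^j) := by rw [hpow]; ring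
  rw [h3]
  -- Step e: swap back
  have h4 : ∑ l ∈ Finset.Icc 1 n, ∑ r ∈ Finset.Icc l n,
        (-(Hp (l-1) y / (l:ℚ)^j)) * ((-1:ℚ)^r * (n.choose r)/r)
      = ∑ r ∈ Finset.Icc 1 n, ∑ l ∈ Finset.Icc 1 r,
        (-(Hp (l-1) y / (l:ℚ)^j)) * ((-1:ℚ)^r * (n.choose r)/r) := by
    rw [sum_Icc_swap n (fun r l => (-(Hp (l-1) y / (l:ℚ)^j)) * ((-1:ℚ)^r * (n.choose r)/r))]
  rw [h4]
  -- Step f: match with RHS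
  unfold G
  rw [← Finset.sum_add_distrib]
  refine Finset.sum_congr rfl fun r hr => ?_
  simp only [Finset.mem_Icc] at hr
  have hHp : Hp (r-1) (j :: y) = ∑ l ∈ Finset.Icc 1 (r-1), Hp (l-1) y / (l:ℚ)^j := by
    rw [Hp]
  have hsplit : ∑ l ∈ Finset.Icc 1 r, Hp (l-1) y / (l:ℚ)^j
      = (∑ l ∈ Finset.Icc 1 (r-1), Hp (l-1) y / (l:ℚ)^j) + Hp (r-1) y / (r:ℚ)^j := by
    rw [show r = (r-1)+1 by omega, Finset.sum_Icc_succ_top (by omega : 1 ≤ (r-1)+1)]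
    rw [show (r-1)+1-1 = r-1 by omega]
  have : ∑ l ∈ Finset.Icc 1 r,
        (-(Hp (l-1) y / (l:ℚ)^j)) * ((-1:ℚ)^r * (n.choose r)/r)
      = (-((-1:ℚ)^r * (n.choose r)/r)) * ∑ l ∈ Finset.Icc 1 r, Hp (l-1) y / (l:ℚ)^j := by
    rw [Finset.mul_sum]
    refine Finset.sum_congr rfl fun l _ => ?_
    ring
  rw [this, hsplit, hHp, pow_succ, pow_succ]
  have hr0 : (r:ℚ) ≠ 0 := by
    have : 1 ≤ r := hr.1
    exact_mod_cast Nat.one_le_iff_ne_zero.mp this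
  field_simp
  ring

lemma listsum_map_sub {α : Type} (L : List α) (f g : α → ℚ) :
    (L.map f).sum - (L.map g).sum = (L.map (fun x => f x - g x)).sum := by
  induction L with
  | nil => simp
  | cons a r ih => simp only [List.map_cons, List.sum_cons, ← ih]; ring

lemma listsum_map_add {α : Type} (L : List α) (f g : α → ℚ) :
    (L.map f).sum + (L.map g).sum = (L.map (fun x => f x + g x)).sum := by
  induction L with
  | nil => simp
  | cons a r ih => simp only [List.map_cons, List.sum_cons, ← ih]; ring

lemma listsum_map_div {α : Type} (L : List α) (f : α → ℚ) (d : ℚ) :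
    (L.map f).sum / d = (L.map (fun x => f x / d)).sum := by
  induction L with
  | nil => simp
  | cons a r ih => simp only [List.map_cons, List.sum_cons, ← ih]; ring

lemma listsum_swap {α : Type} (L : List α) (s : Finset ℕ) (f : α → ℕ → ℚ) :
    ∑ k ∈ s, ((L.map (fun x => f x k)).sum) = (L.map (fun x => ∑ k ∈ s, f x k)).sum := by
  induction L with
  | nil => simp
  | cons a r ih => simp only [List.map_cons, List.sum_cons, ← ih, Finset.sum_add_distrib]

def Tb (c m : ℕ) (s : List ℕ) (r : ℕ) : ℚ :=
  ∑ i ∈ Finset.range (c-1), ∑ j ∈ Finset.range (c-1-i),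
    ((comps (c-2-i-j)).map (fun x => G r (j+1) (x ++ (i+1+m) :: s))).sum

lemma Tb_diff_sum (c m : ℕ) (s : List ℕ) (n : ℕ) :
    ∑ k ∈ Finset.Icc 1 n, (Tb c m s k - Tb c m s (k-1))/k
      = ∑ i ∈ Finset.range (c-1), ∑ j ∈ Finset.range (c-1-i),
          ((comps (c-2-i-j)).map (fun x =>
            G n (j+2) (x ++ (i+1+m) :: s) + G n 1 ((j+1) :: (x ++ (i+1+m) :: s)))).sum := by
  have step1 : ∀ k : ℕ, (Tb c m s k - Tb c m s (k-1))/k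
      = ∑ i ∈ Finset.range (c-1), ∑ j ∈ Finset.range (c-1-i),
          ((comps (c-2-i-j)).map (fun x =>
            (G k (j+1) (x ++ (i+1+m) :: s) - G (k-1) (j+1) (x ++ (i+1+m) :: s))/k)).sum := by
    intro k
    unfold Tb
    rw [← Finset.sum_sub_distrib, Finset.sum_div]
    refine Finset.sum_congr rfl fun i _ => ?_
    rw [← Finset.sum_sub_distrib, Finset.sum_div]
    refine Finset.sum_congr rfl fun j _ => ?_
    rw [listsum_map_sub, listsum_map_div]
  rw [Finset.sum_congr rfl (fun k _ => step1 k)]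
  rw [Finset.sum_comm]
  refine Finset.sum_congr rfl fun i _ => ?_
  rw [Finset.sum_comm]
  refine Finset.sum_congr rfl fun j _ => ?_
  rw [listsum_swap]
  refine congrArg _ (List.map_congr_left fun x _ => ?_)
  exact G_diff n (j+1) (x ++ (i+1+m) :: s)

lemma Tb_succ (c m : ℕ) (hc : 1 ≤ c) (s : List ℕ) (n : ℕ) :
    Tb (c+1) m s n = G n 1 ((m+c) :: s)
      + ∑ i ∈ Finset.range (c-1), ∑ j ∈ Finset.range (c-1-i),
          ((comps (c-2-i-j)).map (fun x =>
            G n (j+2) (x ++ (i+1+m) :: s) + G n 1 ((j+1) :: (x ++ (i+1+m) :: s)))).sum := by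
  unfold Tb
  rw [show c+1-1 = c by omega]
  have hinner : ∀ i ∈ Finset.range c,
      ∑ j ∈ Finset.range (c-i),
        ((comps (c+1-2-i-j)).map (fun x => G n (j+1) (x ++ (i+1+m) :: s))).sum
      = (∑ j ∈ Finset.range (c-1-i),
          ((comps (c-2-i-j)).map (fun x => G n (j+2) (x ++ (i+1+m) :: s))).sum)
        + ((comps (c-1-i)).map (fun x => G n 1 (x ++ (i+1+m) :: s))).sum := by
    intro i hi
    simp only [Finset.mem_range] at hi
    rw [show c-i = (c-1-i)+1 by omega, Finset.sum_range_succ']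
    congr 1
    refine Finset.sum_congr rfl fun j hj => ?_
    simp only [Finset.mem_range] at hj
    rw [show c+1-2-i-(j+1) = c-2-i-j by omega]
  rw [Finset.sum_congr rfl hinner, Finset.sum_add_distrib]
  have hfirst : ∑ i ∈ Finset.range c,
      ∑ j ∈ Finset.range (c-1-i),
        ((comps (c-2-i-j)).map (fun x => G n (j+2) (x ++ (i+1+m) :: s))).sum
      = ∑ i ∈ Finset.range (c-1),
        ∑ j ∈ Finset.range (c-1-i),
          ((comps (c-2-i-j)).map (fun x => G n (j+2) (x ++ (i+1+m) :: s))).sum := by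
    rw [show c = (c-1)+1 by omega, Finset.sum_range_succ]
    rw [show (c-1)+1-1-(c-1) = 0 by omega]
    simp [show (c-1)+1 = c by omega]
  have hsecond : ∑ i ∈ Finset.range c,
      ((comps (c-1-i)).map (fun x => G n 1 (x ++ (i+1+m) :: s))).sum
      = G n 1 ((m+c) :: s)
        + ∑ i ∈ Finset.range (c-1),
          ∑ j ∈ Finset.range (c-1-i),
            ((comps (c-2-i-j)).map (fun x => G n 1 ((j+1) :: (x ++ (i+1+m) :: s)))).sum := by
    rw [show c = (c-1)+1 by omega, Finset.sum_range_succ]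
    rw [show (c-1)+1-1-(c-1) = 0 by omega]
    have htop : ((comps 0).map (fun x => G n 1 (x ++ ((c-1)+1+m) :: s))).sum
        = G n 1 ((m+((c-1)+1)) :: s) := by
      rw [show comps 0 = [[]] from by rw [comps]]
      simp only [List.map_cons, List.map_nil, List.sum_cons, List.sum_nil, List.nil_append,
        add_zero]
      rw [show (c-1)+1+m = m+((c-1)+1) by omega]
    rw [htop, add_comm]
    congr 1
    refine Finset.sum_congr rfl fun i hi => ?_
    simp only [Finset.mem_range] at hi
    rw [show (c-1)+1-1-i = (c-2-i)+1 by omega, comps_succ_sum]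
    rw [show (c-2-i)+1 = c-1-i by omega]
    refine Finset.sum_congr rfl fun j hj => ?_
    rfl
  rw [hfirst, hsecond]
  have hcomb : ∀ i ∈ Finset.range (c-1), ∀ j ∈ Finset.range (c-1-i),
      ((comps (c-2-i-j)).map (fun x => G n (j+2) (x ++ (i+1+m) :: s))).sum
      + ((comps (c-2-i-j)).map (fun x => G n 1 ((j+1) :: (x ++ (i+1+m) :: s)))).sum
      = ((comps (c-2-i-j)).map (fun x =>
          G n (j+2) (x ++ (i+1+m) :: s) + G n 1 ((j+1) :: (x ++ (i+1+m) :: s)))).sum := by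
    intro i _ j _
    rw [listsum_map_add]
  have hAC : (∑ i ∈ Finset.range (c-1), ∑ j ∈ Finset.range (c-1-i),
        ((comps (c-2-i-j)).map (fun x => G n (j+2) (x ++ (i+1+m) :: s))).sum)
      + (∑ i ∈ Finset.range (c-1), ∑ j ∈ Finset.range (c-1-i),
        ((comps (c-2-i-j)).map (fun x => G n 1 ((j+1) :: (x ++ (i+1+m) :: s)))).sum)
      = ∑ i ∈ Finset.range (c-1), ∑ j ∈ Finset.range (c-1-i),
        ((comps (c-2-i-j)).map (fun x =>
          G n (j+2) (x ++ (i+1+m) :: s) + G n 1 ((j+1) :: (x ++ (i+1+m) :: s)))).sum := by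
    rw [← Finset.sum_add_distrib]
    refine Finset.sum_congr rfl fun i hi => ?_
    rw [← Finset.sum_add_distrib]
    refine Finset.sum_congr rfl fun j hj => ?_
    exact hcomb i hi j hj
  linarith [hAC]

lemma G_block : ∀ c, 1 ≤ c → ∀ n m (s : List ℕ),
    ∑ k ∈ Finset.Icc 1 n, G k m s / (k:ℚ)^c = G n (m+c) s + Tb c m s n := by
  intro c
  induction c with
  | zero => omega
  | succ c ihc =>
    intro _ n m s
    rcases Nat.eq_zero_or_pos c with rfl | hc
    · have hT : Tb 1 m s n = 0 := by simp [Tb]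
      rw [hT, add_zero]
      have h : ∀ k ∈ Finset.Icc 1 n, G k m s / (k:ℚ)^1 = G k m s / k := by
        intro k _; rw [pow_one]
      rw [Finset.sum_congr rfl h, G_one_step]
    · have IH := ihc hc
      have step : ∀ k ∈ Finset.Icc 1 n, G k m s / (k:ℚ)^(c+1)
          = ((G k (m+c) s - G (k-1) (m+c) s)/k + (Tb c m s k - Tb c m s (k-1))/k) := by
        intro k hk
        simp only [Finset.mem_Icc] at hk
        have h1 : ∑ u ∈ Finset.Icc 1 k, G u m s / (u:ℚ)^c
            = (∑ u ∈ Finset.Icc 1 (k-1), G u m s / (u:ℚ)^c) + G k m s / (k:ℚ)^c := by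
          rw [show k = (k-1)+1 by omega, Finset.sum_Icc_succ_top (by omega : 1 ≤ (k-1)+1)]
          rw [show (k-1)+1-1 = k-1 by omega]
        have h2 := IH k m s
        have h3 := IH (k-1) m s
        have h4 : G k m s / (k:ℚ)^c
            = (G k (m+c) s - G (k-1) (m+c) s) + (Tb c m s k - Tb c m s (k-1)) := by
          rw [h2, h3] at h1
          linarith
        rw [pow_succ, ← div_div, h4]
        ring
      rw [Finset.sum_congr rfl step, Finset.sum_add_distrib, G_diff, Tb_diff_sum,
        Tb_succ c m hc s n]
      rw [show m+c+1 = m+(c+1) by omega]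
      ring

lemma div_into_double (A : ℕ) (B : ℕ → ℕ) (L : ℕ → ℕ → List (List ℕ))
    (f : ℕ → ℕ → List ℕ → ℚ) (d : ℚ) :
    (∑ i ∈ Finset.range A, ∑ j ∈ Finset.range (B i),
        ((L i j).map (fun x => f i j x)).sum)/d
      = ∑ i ∈ Finset.range A, ∑ j ∈ Finset.range (B i),
        ((L i j).map (fun x => f i j x / d)).sum := by
  rw [Finset.sum_div]
  refine Finset.sum_congr rfl fun i _ => ?_
  rw [Finset.sum_div]
  refine Finset.sum_congr rfl fun j _ => ?_
  rw [listsum_map_div]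

lemma neg_into_double (A : ℕ) (B : ℕ → ℕ) (L : ℕ → ℕ → List (List ℕ))
    (f : ℕ → ℕ → List ℕ → ℚ) :
    -(∑ i ∈ Finset.range A, ∑ j ∈ Finset.range (B i),
        ((L i j).map (fun x => f i j x)).sum)
      = ∑ i ∈ Finset.range A, ∑ j ∈ Finset.range (B i),
        ((L i j).map (fun x => -(f i j x))).sum := by
  rw [← Finset.sum_neg_distrib]
  refine Finset.sum_congr rfl fun i _ => ?_
  rw [← Finset.sum_neg_distrib]
  refine Finset.sum_congr rfl fun j _ => ?_
  induction L i j with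
  | nil => simp
  | cons a r ih => simp only [List.map_cons, List.sum_cons, ← ih]; ring

lemma add_into_double (A : ℕ) (B : ℕ → ℕ) (L : ℕ → ℕ → List (List ℕ))
    (f g : ℕ → ℕ → List ℕ → ℚ) :
    (∑ i ∈ Finset.range A, ∑ j ∈ Finset.range (B i),
        ((L i j).map (fun x => f i j x)).sum)
      + (∑ i ∈ Finset.range A, ∑ j ∈ Finset.range (B i),
        ((L i j).map (fun x => g i j x)).sum)
      = ∑ i ∈ Finset.range A, ∑ j ∈ Finset.range (B i),
        ((L i j).map (fun x => f i j x + g i j x)).sum := by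
  rw [← Finset.sum_add_distrib]
  refine Finset.sum_congr rfl fun i _ => ?_
  rw [← Finset.sum_add_distrib]
  refine Finset.sum_congr rfl fun j _ => ?_
  rw [listsum_map_add]

lemma pull_sum (A : ℕ) (B : ℕ → ℕ) (L : ℕ → ℕ → List (List ℕ)) (s : Finset ℕ)
    (f : ℕ → ℕ → List ℕ → ℕ → ℚ) :
    ∑ i ∈ Finset.range A, ∑ j ∈ Finset.range (B i),
        ((L i j).map (fun x => ∑ r ∈ s, f i j x r)).sum
      = ∑ r ∈ s, ∑ i ∈ Finset.range A, ∑ j ∈ Finset.range (B i),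
        ((L i j).map (fun x => f i j x r)).sum := by
  symm
  rw [Finset.sum_comm]
  refine Finset.sum_congr rfl fun i _ => ?_
  rw [Finset.sum_comm]
  refine Finset.sum_congr rfl fun j _ => ?_
  rw [listsum_swap]

lemma pull_listsum (A : ℕ) (B : ℕ → ℕ) (L : ℕ → ℕ → List (List ℕ)) (M : List (List ℕ))
    (f : ℕ → ℕ → List ℕ → List ℕ → ℚ) :
    ∑ i ∈ Finset.range A, ∑ j ∈ Finset.range (B i),
        ((L i j).map (fun x => (M.map (fun y => f i j x y)).sum)).sum
      = (M.map (fun y => ∑ i ∈ Finset.range A, ∑ j ∈ Finset.range (B i),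
          ((L i j).map (fun x => f i j x y)).sum)).sum := by
  induction M with
  | nil =>
    simp only [List.map_nil, List.sum_nil]
    refine Finset.sum_eq_zero fun i _ => Finset.sum_eq_zero fun j _ => ?_
    induction L i j with
    | nil => simp
    | cons a r ih => simp only [List.map_cons, List.sum_cons, ih]; simp
  | cons y M ih =>
    simp only [List.map_cons, List.sum_cons]
    rw [← ih, ← add_into_double]

lemma big_swap (A1 A2 : ℕ) (B1 B2 : ℕ → ℕ) (L1 L2 : ℕ → ℕ → List (List ℕ))
    (E : ℕ → ℕ → List ℕ → ℕ → ℕ → List ℕ → ℚ) :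
    ∑ i2 ∈ Finset.range A2, ∑ j2 ∈ Finset.range (B2 i2), ((L2 i2 j2).map (fun x2 =>
      ∑ i1 ∈ Finset.range A1, ∑ j1 ∈ Finset.range (B1 i1), ((L1 i1 j1).map (fun x1 =>
        E i1 j1 x1 i2 j2 x2)).sum)).sum
    = ∑ i1 ∈ Finset.range A1, ∑ j1 ∈ Finset.range (B1 i1), ((L1 i1 j1).map (fun x1 =>
      ∑ i2 ∈ Finset.range A2, ∑ j2 ∈ Finset.range (B2 i2), ((L2 i2 j2).map (fun x2 =>
        E i1 j1 x1 i2 j2 x2)).sum)).sum := by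
  rw [pull_sum A2 B2 L2 (Finset.range A1)]
  refine Finset.sum_congr rfl fun i1 _ => ?_
  rw [pull_sum A2 B2 L2 (Finset.range (B1 i1))]
  refine Finset.sum_congr rfl fun j1 _ => ?_
  rw [pull_listsum A2 B2 L2 (L1 i1 j1)]

lemma ones_shift (w0 : List ℕ) (Φ : ℕ → ℕ → ℚ)
    (hstep : ∀ m n, ∑ k ∈ Finset.Icc 1 n, Φ m k / k = Φ (m+1) n)
    (hbase : ∀ n, 1 ≤ n → Hps n w0 = Φ 0 n) :
    ∀ a n, 1 ≤ n → Hps n (List.replicate a 1 ++ w0) = Φ a n := by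
  intro a
  induction a with
  | zero => intro n hn; rw [List.replicate_zero, List.nil_append]; exact hbase n hn
  | succ a ih =>
    intro n hn
    rw [List.replicate_succ, List.cons_append, Hps]
    have h : ∀ k ∈ Finset.Icc 1 n,
        Hps k (List.replicate a 1 ++ w0) / (k:ℚ)^1 = Φ a k / k := by
      intro k hk
      simp only [Finset.mem_Icc] at hk
      rw [ih k hk.1, pow_one]
    rw [Finset.sum_congr rfl h, hstep a n]

lemma P0 (t n : ℕ) (hn : 1 ≤ n) : Hps n (List.replicate t 1) = G n t [] := by
  have h := ones_shift [] (fun m n => G n m []) (fun m n => G_one_step n m [])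
    (fun n hn => by show Hps n [] = G n 0 []; rw [show Hps n [] = 1 from rfl, G_zero n hn]) t n hn
  simp only [List.append_nil] at h
  exact h

def Phi2 (c2 t m n : ℕ) : ℚ :=
  G n (m+c2+t) []
  + ∑ i ∈ Finset.range (c2-1), ∑ j ∈ Finset.range (c2-1-i),
      ((comps (c2-2-i-j)).map (fun x => G n (m+(j+1)) (x ++ [i+1+t]))).sum

lemma Phi2_step (c2 t : ℕ) : ∀ m n,
    ∑ k ∈ Finset.Icc 1 n, Phi2 c2 t m k / k = Phi2 c2 t (m+1) n := by
  intro m n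
  have hsplit : ∀ k : ℕ, Phi2 c2 t m k / k
      = G k (m+c2+t) [] / k
        + ∑ i ∈ Finset.range (c2-1), ∑ j ∈ Finset.range (c2-1-i),
            ((comps (c2-2-i-j)).map (fun x => G k (m+(j+1)) (x ++ [i+1+t]) / k)).sum := by
    intro k
    unfold Phi2
    rw [add_div, div_into_double]
  rw [Finset.sum_congr rfl (fun k _ => hsplit k), Finset.sum_add_distrib]
  unfold Phi2
  congr 1
  · rw [G_one_step, show m+c2+t+1 = m+1+c2+t by omega]
  · rw [← pull_sum]
    refine Finset.sum_congr rfl fun i _ => Finset.sum_congr rfl fun j _ =>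
      congrArg _ (List.map_congr_left fun x _ => ?_)
    rw [G_one_step, show m+(j+1)+1 = m+1+(j+1) by omega]

lemma P1 (c2 t : ℕ) (hc2 : 1 ≤ c2) : ∀ n, 1 ≤ n →
    Hps n (c2 :: List.replicate t 1) = Phi2 c2 t 0 n := by
  intro n hn
  rw [Hps]
  have h : ∀ k ∈ Finset.Icc 1 n,
      Hps k (List.replicate t 1) / (k:ℚ)^c2 = G k t [] / (k:ℚ)^c2 := by
    intro k hk
    simp only [Finset.mem_Icc] at hk
    rw [P0 t k hk.1]
  rw [Finset.sum_congr rfl h, G_block c2 hc2 n t []]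
  unfold Phi2 Tb
  congr 1
  · rw [show t+c2 = 0+c2+t by omega]
  · refine Finset.sum_congr rfl fun i _ => Finset.sum_congr rfl fun j _ =>
      congrArg _ (List.map_congr_left fun x _ => ?_)
    rw [show i+1+t = i+1+t from rfl, show (0:ℕ)+(j+1) = j+1 by omega]

lemma P1' (c2 t : ℕ) (hc2 : 1 ≤ c2) : ∀ a n, 1 ≤ n →
    Hps n (List.replicate a 1 ++ c2 :: List.replicate t 1) = Phi2 c2 t a n :=
  ones_shift _ (Phi2 c2 t) (Phi2_step c2 t) (P1 c2 t hc2)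

def Phi3 (c1 a2 c2 t m n : ℕ) : ℚ :=
  G n (m+c1+a2+c2+t) []
  + (∑ i2 ∈ Finset.range (c2-1), ∑ j2 ∈ Finset.range (c2-1-i2),
      ((comps (c2-2-i2-j2)).map (fun x2 => G n (m+c1+a2+(j2+1)) (x2 ++ [i2+1+t]))).sum)
  + (∑ i1 ∈ Finset.range (c1-1), ∑ j1 ∈ Finset.range (c1-1-i1),
      ((comps (c1-2-i1-j1)).map (fun x1 => G n (m+(j1+1)) (x1 ++ [i1+1+a2+c2+t]))).sum)
  + (∑ i1 ∈ Finset.range (c1-1), ∑ j1 ∈ Finset.range (c1-1-i1),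
      ((comps (c1-2-i1-j1)).map (fun x1 =>
        ∑ i2 ∈ Finset.range (c2-1), ∑ j2 ∈ Finset.range (c2-1-i2),
          ((comps (c2-2-i2-j2)).map (fun x2 =>
            G n (m+(j1+1)) (x1 ++ (i1+1+a2+(j2+1)) :: (x2 ++ [i2+1+t])))).sum)).sum)

lemma P2base (c1 a2 c2 t : ℕ) (hc1 : 1 ≤ c1) (hc2 : 1 ≤ c2) : ∀ n, 1 ≤ n →
    Hps n (c1 :: (List.replicate a2 1 ++ c2 :: List.replicate t 1))
      = Phi3 c1 a2 c2 t 0 n := by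
  intro n hn
  rw [Hps]
  have h1 : ∀ k ∈ Finset.Icc 1 n,
      Hps k (List.replicate a2 1 ++ c2 :: List.replicate t 1) / (k:ℚ)^c1
      = G k (a2+c2+t) [] / (k:ℚ)^c1
        + ∑ i2 ∈ Finset.range (c2-1), ∑ j2 ∈ Finset.range (c2-1-i2),
            ((comps (c2-2-i2-j2)).map (fun x2 =>
              G k (a2+(j2+1)) (x2 ++ [i2+1+t]) / (k:ℚ)^c1)).sum := by
    intro k hk
    simp only [Finset.mem_Icc] at hk
    rw [P1' c2 t hc2 a2 k hk.1]
    unfold Phi2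
    rw [add_div, div_into_double]
  rw [Finset.sum_congr rfl h1, Finset.sum_add_distrib]
  have hA := G_block c1 hc1 n (a2+c2+t) []
  have hB : ∑ k ∈ Finset.Icc 1 n,
      (∑ i2 ∈ Finset.range (c2-1), ∑ j2 ∈ Finset.range (c2-1-i2),
        ((comps (c2-2-i2-j2)).map (fun x2 =>
          G k (a2+(j2+1)) (x2 ++ [i2+1+t]) / (k:ℚ)^c1)).sum)
      = (∑ i2 ∈ Finset.range (c2-1), ∑ j2 ∈ Finset.range (c2-1-i2),
          ((comps (c2-2-i2-j2)).map (fun x2 =>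
            G n (a2+(j2+1)+c1) (x2 ++ [i2+1+t]))).sum)
        + (∑ i2 ∈ Finset.range (c2-1), ∑ j2 ∈ Finset.range (c2-1-i2),
          ((comps (c2-2-i2-j2)).map (fun x2 =>
            Tb c1 (a2+(j2+1)) (x2 ++ [i2+1+t]) n)).sum) := by
    rw [← pull_sum, add_into_double]
    refine Finset.sum_congr rfl fun i2 _ => Finset.sum_congr rfl fun j2 _ =>
      congrArg _ (List.map_congr_left fun x2 _ => ?_)
    exact G_block c1 hc1 n (a2+(j2+1)) (x2 ++ [i2+1+t])
  rw [hA, hB]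
  have e1 : G n (a2+c2+t+c1) [] = G n (0+c1+a2+c2+t) [] := by
    rw [show a2+c2+t+c1 = 0+c1+a2+c2+t by omega]
  have e2 : ∑ i2 ∈ Finset.range (c2-1), ∑ j2 ∈ Finset.range (c2-1-i2),
        ((comps (c2-2-i2-j2)).map (fun x2 =>
          G n (a2+(j2+1)+c1) (x2 ++ [i2+1+t]))).sum
      = ∑ i2 ∈ Finset.range (c2-1), ∑ j2 ∈ Finset.range (c2-1-i2),
        ((comps (c2-2-i2-j2)).map (fun x2 =>
          G n (0+c1+a2+(j2+1)) (x2 ++ [i2+1+t]))).sum := by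
    refine Finset.sum_congr rfl fun i2 _ => Finset.sum_congr rfl fun j2 _ =>
      congrArg _ (List.map_congr_left fun x2 _ => ?_)
    rw [show a2+(j2+1)+c1 = 0+c1+a2+(j2+1) by omega]
  have e3 : Tb c1 (a2+c2+t) [] n
      = ∑ i1 ∈ Finset.range (c1-1), ∑ j1 ∈ Finset.range (c1-1-i1),
        ((comps (c1-2-i1-j1)).map (fun x1 =>
          G n (0+(j1+1)) (x1 ++ [i1+1+a2+c2+t]))).sum := by
    unfold Tb
    refine Finset.sum_congr rfl fun i1 _ => Finset.sum_congr rfl fun j1 _ =>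
      congrArg _ (List.map_congr_left fun x1 _ => ?_)
    rw [show i1+1+(a2+c2+t) = i1+1+a2+c2+t by omega, show (0:ℕ)+(j1+1) = j1+1 by omega]
  have e4 : ∑ i2 ∈ Finset.range (c2-1), ∑ j2 ∈ Finset.range (c2-1-i2),
        ((comps (c2-2-i2-j2)).map (fun x2 =>
          Tb c1 (a2+(j2+1)) (x2 ++ [i2+1+t]) n)).sum
      = ∑ i1 ∈ Finset.range (c1-1), ∑ j1 ∈ Finset.range (c1-1-i1),
        ((comps (c1-2-i1-j1)).map (fun x1 =>
          ∑ i2 ∈ Finset.range (c2-1), ∑ j2 ∈ Finset.range (c2-1-i2),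
            ((comps (c2-2-i2-j2)).map (fun x2 =>
              G n (0+(j1+1)) (x1 ++ (i1+1+a2+(j2+1)) :: (x2 ++ [i2+1+t])))).sum)).sum := by
    simp only [Tb]
    rw [big_swap]
    refine Finset.sum_congr rfl fun i1 _ => Finset.sum_congr rfl fun j1 _ =>
      congrArg _ (List.map_congr_left fun x1 _ => ?_)
    refine Finset.sum_congr rfl fun i2 _ => Finset.sum_congr rfl fun j2 _ =>
      congrArg _ (List.map_congr_left fun x2 _ => ?_)
    rw [show i1+1+(a2+(j2+1)) = i1+1+a2+(j2+1) by omega, show (0:ℕ)+(j1+1) = j1+1 by omega]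
  rw [e1, e2, e3, e4]
  unfold Phi3
  ring

lemma Phi3_step (c1 a2 c2 t : ℕ) : ∀ m n,
    ∑ k ∈ Finset.Icc 1 n, Phi3 c1 a2 c2 t m k / k = Phi3 c1 a2 c2 t (m+1) n := by
  intro m n
  have hsplit : ∀ k : ℕ, Phi3 c1 a2 c2 t m k / k
      = G k (m+c1+a2+c2+t) [] / k
        + (∑ i2 ∈ Finset.range (c2-1), ∑ j2 ∈ Finset.range (c2-1-i2),
            ((comps (c2-2-i2-j2)).map (fun x2 =>
              G k (m+c1+a2+(j2+1)) (x2 ++ [i2+1+t]) / k)).sum)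
        + (∑ i1 ∈ Finset.range (c1-1), ∑ j1 ∈ Finset.range (c1-1-i1),
            ((comps (c1-2-i1-j1)).map (fun x1 =>
              G k (m+(j1+1)) (x1 ++ [i1+1+a2+c2+t]) / k)).sum)
        + (∑ i1 ∈ Finset.range (c1-1), ∑ j1 ∈ Finset.range (c1-1-i1),
            ((comps (c1-2-i1-j1)).map (fun x1 =>
              ∑ i2 ∈ Finset.range (c2-1), ∑ j2 ∈ Finset.range (c2-1-i2),
                ((comps (c2-2-i2-j2)).map (fun x2 =>
                  G k (m+(j1+1)) (x1 ++ (i1+1+a2+(j2+1)) :: (x2 ++ [i2+1+t])) / k)).sum)).sum) := by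
    intro k
    unfold Phi3
    rw [add_div, add_div, add_div, div_into_double, div_into_double, div_into_double]
    congr 1
    refine Finset.sum_congr rfl fun i1 _ => Finset.sum_congr rfl fun j1 _ =>
      congrArg _ (List.map_congr_left fun x1 _ => ?_)
    rw [div_into_double]
  rw [Finset.sum_congr rfl (fun k _ => hsplit k), Finset.sum_add_distrib,
    Finset.sum_add_distrib, Finset.sum_add_distrib]
  unfold Phi3
  congr 1
  · congr 1
    · congr 1
      · rw [G_one_step, show m+c1+a2+c2+t+1 = m+1+c1+a2+c2+t by omega]
      · rw [← pull_sum]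
        refine Finset.sum_congr rfl fun i2 _ => Finset.sum_congr rfl fun j2 _ =>
          congrArg _ (List.map_congr_left fun x2 _ => ?_)
        rw [G_one_step, show m+c1+a2+(j2+1)+1 = m+1+c1+a2+(j2+1) by omega]
    · rw [← pull_sum]
      refine Finset.sum_congr rfl fun i1 _ => Finset.sum_congr rfl fun j1 _ =>
        congrArg _ (List.map_congr_left fun x1 _ => ?_)
      rw [G_one_step, show m+(j1+1)+1 = m+1+(j1+1) by omega]
  · rw [← pull_sum]
    refine Finset.sum_congr rfl fun i1 _ => Finset.sum_congr rfl fun j1 _ =>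
      congrArg _ (List.map_congr_left fun x1 _ => ?_)
    rw [← pull_sum]
    refine Finset.sum_congr rfl fun i2 _ => Finset.sum_congr rfl fun j2 _ =>
      congrArg _ (List.map_congr_left fun x2 _ => ?_)
    rw [G_one_step, show m+(j1+1)+1 = m+1+(j1+1) by omega]

lemma P2 (c1 a2 c2 t : ℕ) (hc1 : 1 ≤ c1) (hc2 : 1 ≤ c2) : ∀ a1 n, 1 ≤ n →
    Hps n (List.replicate a1 1 ++ c1 :: (List.replicate a2 1 ++ c2 :: List.replicate t 1))
      = Phi3 c1 a2 c2 t a1 n :=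
  ones_shift _ (Phi3 c1 a2 c2 t) (Phi3_step c1 a2 c2 t) (P2base c1 a2 c2 t hc1 hc2)

lemma natList_cons (c : ℕ) (r : List ℕ) : natList (c :: r) = (c:ℤ) :: natList r := rfl

lemma natList_append (l r : List ℕ) : natList (l ++ r) = natList l ++ natList r := by
  induction l with
  | nil => rfl
  | cons a l ih => rw [List.cons_append, natList_cons, natList_cons, ih, List.cons_append]

lemma natList_replicate (a : ℕ) : natList (List.replicate a 1) = List.replicate a (1:ℤ) := by
  induction a with
  | zero => rfl
  | succ a ih => rw [List.replicate_succ, natList_cons, ih, List.replicate_succ, Nat.cast_one]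

theorem stmt17 (n a1 c1 a2 c2 t : ℕ) (hn : 1 ≤ n) (hc1 : 1 ≤ c1) (hc2 : 1 ≤ c2) :
    Hstar n (List.replicate a1 1 ++ [(c1 : ℤ)] ++ List.replicate a2 1 ++ [(c2 : ℤ)]
              ++ List.replicate t 1)
      = -(∑ k ∈ Finset.Icc 1 n,
            (-1 : ℚ) ^ k * (n.choose k) / (k : ℚ) ^ (a1+c1+a2+c2+t))
        - (∑ i2 ∈ Finset.range (c2 - 1), ∑ j2 ∈ Finset.range (c2 - 1 - i2),
            ((comps (c2 - 2 - i2 - j2)).map (fun x2 =>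
              ∑ k ∈ Finset.Icc 1 n,
                (-1 : ℚ) ^ k * Hh (k-1) (natList (x2 ++ [i2 + 1 + t])) * (n.choose k)
                  / (k : ℚ) ^ (a1+c1+a2+(j2+1)))).sum)
        - (∑ i1 ∈ Finset.range (c1 - 1), ∑ j1 ∈ Finset.range (c1 - 1 - i1),
            ((comps (c1 - 2 - i1 - j1)).map (fun x1 =>
              ∑ k ∈ Finset.Icc 1 n,
                (-1 : ℚ) ^ k * Hh (k-1) (natList (x1 ++ [i1 + 1 + a2 + c2 + t]))
                  * (n.choose k) / (k : ℚ) ^ (a1+(j1+1)))).sum)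
        - (∑ i1 ∈ Finset.range (c1 - 1), ∑ j1 ∈ Finset.range (c1 - 1 - i1),
            ((comps (c1 - 2 - i1 - j1)).map (fun x1 =>
              ∑ i2 ∈ Finset.range (c2 - 1), ∑ j2 ∈ Finset.range (c2 - 1 - i2),
                ((comps (c2 - 2 - i2 - j2)).map (fun x2 =>
                  ∑ k ∈ Finset.Icc 1 n,
                    (-1 : ℚ) ^ k
                      * Hh (k-1) (natList (x1 ++ [i1 + 1 + a2 + (j2 + 1)]
                          ++ x2 ++ [i2 + 1 + t]))
                      * (n.choose k) / (k : ℚ) ^ (a1+(j1+1)))).sum)).sum) := by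
  have hlist : List.replicate a1 (1:ℤ) ++ [(c1 : ℤ)] ++ List.replicate a2 1 ++ [(c2 : ℤ)]
        ++ List.replicate t 1
      = natList (List.replicate a1 1 ++ c1 :: (List.replicate a2 1 ++ c2 :: List.replicate t 1)) := by
    rw [natList_append, natList_cons, natList_append, natList_cons, natList_replicate,
      natList_replicate, natList_replicate]
    simp only [List.append_assoc, List.singleton_append, List.cons_append, List.nil_append]
  rw [hlist]
  have hpos : ∀ x ∈ (List.replicate a1 1 ++ c1 ::
      (List.replicate a2 1 ++ c2 :: List.replicate t 1)), 1 ≤ x := by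
    intro x hx
    simp only [List.mem_append, List.mem_cons, List.mem_replicate] at hx
    rcases hx with ⟨_, rfl⟩ | rfl | ⟨_, rfl⟩ | rfl | ⟨_, rfl⟩ <;> omega
  rw [hps_cast _ hpos n, P2 c1 a2 c2 t hc1 hc2 a1 n hn]
  rw [sub_eq_add_neg, sub_eq_add_neg, sub_eq_add_neg]
  unfold Phi3
  congr 1
  · congr 1
    · congr 1
      · -- group 1
        rw [← Finset.sum_neg_distrib]
        unfold G
        refine Finset.sum_congr rfl fun k _ => ?_
        rw [show Hp (k-1) [] = (1:ℚ) from rfl, pow_succ]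
        ring
      · -- group 2
        rw [neg_into_double]
        refine Finset.sum_congr rfl fun i2 _ => Finset.sum_congr rfl fun j2 _ =>
          congrArg _ (List.map_congr_left fun x2 hx2 => ?_)
        unfold G
        rw [← Finset.sum_neg_distrib]
        refine Finset.sum_congr rfl fun k _ => ?_
        have hy : ∀ z ∈ x2 ++ [i2+1+t], 1 ≤ z := by
          intro z hz
          rcases List.mem_append.mp hz with h | h
          · exact comps_pos _ _ hx2 z h
          · simp only [List.mem_singleton] at h; omega
        rw [hp_cast _ hy (k-1), pow_succ]
        ring
    · -- group 3
      rw [neg_into_double]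
      refine Finset.sum_congr rfl fun i1 _ => Finset.sum_congr rfl fun j1 _ =>
        congrArg _ (List.map_congr_left fun x1 hx1 => ?_)
      unfold G
      rw [← Finset.sum_neg_distrib]
      refine Finset.sum_congr rfl fun k _ => ?_
      have hy : ∀ z ∈ x1 ++ [i1+1+a2+c2+t], 1 ≤ z := by
        intro z hz
        rcases List.mem_append.mp hz with h | h
        · exact comps_pos _ _ hx1 z h
        · simp only [List.mem_singleton] at h; omega
      rw [hp_cast _ hy (k-1), pow_succ]
      ring
  · -- group 4
    rw [neg_into_double]
    refine Finset.sum_congr rfl fun i1 _ => Finset.sum_congr rfl fun j1 _ =>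
      congrArg _ (List.map_congr_left fun x1 hx1 => ?_)
    rw [neg_into_double]
    refine Finset.sum_congr rfl fun i2 _ => Finset.sum_congr rfl fun j2 _ =>
      congrArg _ (List.map_congr_left fun x2 hx2 => ?_)
    unfold G
    rw [← Finset.sum_neg_distrib]
    refine Finset.sum_congr rfl fun k _ => ?_
    have hlist2 : x1 ++ [i1+1+a2+(j2+1)] ++ x2 ++ [i2+1+t]
        = x1 ++ (i1+1+a2+(j2+1)) :: (x2 ++ [i2+1+t]) := by
      simp [List.append_assoc]
    rw [hlist2]
    have hy : ∀ z ∈ x1 ++ (i1+1+a2+(j2+1)) :: (x2 ++ [i2+1+t]), 1 ≤ z := by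
      intro z hz
      rcases List.mem_append.mp hz with h | h
      · exact comps_pos _ _ hx1 z h
      · rcases List.mem_cons.mp h with rfl | h2
        · omega
        · rcases List.mem_append.mp h2 with h3 | h3
          · exact comps_pos _ _ hx2 z h3
          · simp only [List.mem_singleton] at h3; omega
    rw [hp_cast _ hy (k-1), pow_succ]
    ring
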